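/- arXiv:2603.29473 — 2 statements merged into one kernel-verified Lean document; each statement's English description precedes it below -/
import Mathlib

section
/- Fix γ>0, λ>0, f(x)=x^γ, a turning point x*>0, and let (S_k) be the WKB hierarchy defined in the context. Then for every integer k ≥ 2 there exists a constant C_k > 0 such that for all x ≥ x*: |S_k'(x)| ≤ C_k·x^{−(2k−1)γ} if 0<γ≤1, and |S_k'(x)| ≤ C_k·x^{−(kγ+k−1)} if γ>1. Moreover, if 0<γ≤1 and γ = 1/(2k−1) (the resonant case 1−(2k−1)γ=0), then there exist C_k>0 and X ≥ max(x*,2) such that |S_k(x)| ≤ C_k·log(x) for all x ≥ X. -/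
open Real MeasureTheory

namespace WKBaux

noncomputable def psFun (l : List (ℝ × ℝ)) (x : ℝ) : ℝ := (l.map fun cp => cp.1 * x ^ cp.2).sum

def dList (l : List (ℝ × ℝ)) : List (ℝ × ℝ) := l.map fun cp => (cp.1 * cp.2, cp.2 - 1)

def shiftList (q : ℝ) (l : List (ℝ × ℝ)) : List (ℝ × ℝ) := l.map fun cp => (cp.1, cp.2 + q)

def mulList (l₁ l₂ : List (ℝ × ℝ)) : List (ℝ × ℝ) :=
  l₁.flatMap fun a => l₂.map fun b => (a.1 * b.1, a.2 + b.2)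

@[simp] lemma psFun_nil (x : ℝ) : psFun [] x = 0 := rfl

@[simp] lemma psFun_cons (c p : ℝ) (l : List (ℝ × ℝ)) (x : ℝ) :
    psFun ((c, p) :: l) x = c * x ^ p + psFun l x := rfl

lemma psFun_append (l₁ l₂ : List (ℝ × ℝ)) (x : ℝ) :
    psFun (l₁ ++ l₂) x = psFun l₁ x + psFun l₂ x := by
  simp [psFun]

lemma psFun_shift (q : ℝ) (l : List (ℝ × ℝ)) {x : ℝ} (hx : 0 < x) :
    psFun (shiftList q l) x = x ^ q * psFun l x := by
  induction l with
  | nil => simp [shiftList]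
  | cons a t ih =>
      obtain ⟨c, p⟩ := a
      simp only [shiftList, List.map_cons, psFun_cons] at *
      rw [ih, Real.rpow_add hx]
      ring

lemma psFun_smulmap (c p : ℝ) (l : List (ℝ × ℝ)) {x : ℝ} (hx : 0 < x) :
    psFun (l.map fun b => (c * b.1, p + b.2)) x = c * x ^ p * psFun l x := by
  induction l with
  | nil => simp
  | cons b t2 ih2 =>
      obtain ⟨d, q⟩ := b
      simp only [List.map_cons, psFun_cons]
      rw [ih2, Real.rpow_add hx]
      ring

lemma psFun_mul (l₁ l₂ : List (ℝ × ℝ)) {x : ℝ} (hx : 0 < x) :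
    psFun (mulList l₁ l₂) x = psFun l₁ x * psFun l₂ x := by
  induction l₁ with
  | nil => simp [mulList]
  | cons a t ih =>
      obtain ⟨c, p⟩ := a
      have h : mulList ((c, p) :: t) l₂
          = (l₂.map fun b => (c * b.1, p + b.2)) ++ mulList t l₂ := by
        simp [mulList]
      rw [h, psFun_append, ih, psFun_cons, psFun_smulmap c p l₂ hx]
      ring

lemma hasDerivAt_psFun (l : List (ℝ × ℝ)) {x : ℝ} (hx : 0 < x) :
    HasDerivAt (psFun l) (psFun (dList l) x) x := by
  induction l with
  | nil => exact hasDerivAt_const x (0 : ℝ)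
  | cons a t ih =>
      obtain ⟨c, p⟩ := a
      have h1 : HasDerivAt (fun y : ℝ => c * y ^ p) (c * (p * x ^ (p - 1))) x :=
        (Real.hasDerivAt_rpow_const (Or.inl hx.ne')).const_mul c
      have := h1.add ih
      simp only [dList, List.map_cons, psFun_cons] at *
      refine this.congr_deriv ?_
      ring

lemma continuousAt_psFun (l : List (ℝ × ℝ)) {x : ℝ} (hx : 0 < x) :
    ContinuousAt (psFun l) x := (hasDerivAt_psFun l hx).continuousAt

lemma dList_exps {l : List (ℝ × ℝ)} {a : ℝ} (h : ∀ cp ∈ l, cp.2 ≤ a) :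
    ∀ cp ∈ dList l, cp.2 ≤ a - 1 := by
  intro cp hcp
  simp only [dList, List.mem_map] at hcp
  obtain ⟨b, hb, rfl⟩ := hcp
  simpa using h b hb

lemma shiftList_exps {l : List (ℝ × ℝ)} {a : ℝ} (q : ℝ) (h : ∀ cp ∈ l, cp.2 ≤ a) :
    ∀ cp ∈ shiftList q l, cp.2 ≤ a + q := by
  intro cp hcp
  simp only [shiftList, List.mem_map] at hcp
  obtain ⟨b, hb, rfl⟩ := hcp
  simpa using h b hb

lemma mulList_exps {l₁ l₂ : List (ℝ × ℝ)} {a b : ℝ}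
    (h₁ : ∀ cp ∈ l₁, cp.2 ≤ a) (h₂ : ∀ cp ∈ l₂, cp.2 ≤ b) :
    ∀ cp ∈ mulList l₁ l₂, cp.2 ≤ a + b := by
  intro cp hcp
  simp only [mulList, List.mem_flatMap, List.mem_map] at hcp
  obtain ⟨u, hu, v, hv, rfl⟩ := hcp
  exact add_le_add (h₁ u hu) (h₂ v hv)

lemma psFun_bound (l : List (ℝ × ℝ)) {x0 a : ℝ} (hx0 : 0 < x0)
    (h : ∀ cp ∈ l, cp.2 ≤ a) :
    ∃ C : ℝ, 0 < C ∧ ∀ x, x0 ≤ x → |psFun l x| ≤ C * x ^ a := by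
  induction l with
  | nil => exact ⟨1, one_pos, fun x hx => by
      simp [Real.rpow_nonneg (le_of_lt (lt_of_lt_of_le hx0 hx))]⟩
  | cons cp t ih =>
      obtain ⟨c, p⟩ := cp
      obtain ⟨C, hC, hCb⟩ := ih (fun b hb => h b (List.mem_cons_of_mem _ hb))
      refine ⟨C + |c| * x0 ^ (p - a), by positivity, fun x hx => ?_⟩
      have hxpos : 0 < x := lt_of_lt_of_le hx0 hx
      have hp : p ≤ a := by simpa using h (c, p) List.mem_cons_self
      have h1 : x ^ p ≤ x0 ^ (p - a) * x ^ a := by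
        have h2 : x ^ p = x ^ (p - a) * x ^ a := by
          rw [← Real.rpow_add hxpos]; ring_nf
        rw [h2]
        have := Real.rpow_le_rpow_of_nonpos hx0 hx (sub_nonpos.mpr hp)
        exact mul_le_mul_of_nonneg_right this (Real.rpow_nonneg hxpos.le _)
      calc |psFun ((c, p) :: t) x| ≤ |c * x ^ p| + |psFun t x| := by
              rw [psFun_cons]; exact abs_add_le _ _
        _ ≤ |c| * (x0 ^ (p - a) * x ^ a) + C * x ^ a := by
              refine add_le_add ?_ (hCb x hx)
              rw [abs_mul, abs_of_nonneg (Real.rpow_nonneg hxpos.le p)]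
              exact mul_le_mul_of_nonneg_left h1 (abs_nonneg c)
        _ = (C + |c| * x0 ^ (p - a)) * x ^ a := by ring

lemma exists_psList_sum {ι : Type*} (s : Finset ι) (f : ι → ℝ → ℝ) (a : ℝ) (D : Set ℝ)
    (h : ∀ i ∈ s, ∃ l : List (ℝ × ℝ), (∀ cp ∈ l, cp.2 ≤ a) ∧ ∀ x ∈ D, f i x = psFun l x) :
    ∃ L : List (ℝ × ℝ), (∀ cp ∈ L, cp.2 ≤ a) ∧ ∀ x ∈ D, (∑ i ∈ s, f i x) = psFun L x := by
  classical
  induction s using Finset.cons_induction with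
  | empty => exact ⟨[], by simp, by simp⟩
  | cons i s his ih =>
      obtain ⟨l, hl, hfl⟩ := h i (Finset.mem_cons_self i s)
      obtain ⟨L, hL, hFL⟩ := ih fun j hj => h j (Finset.mem_cons_of_mem hj)
      refine ⟨l ++ L, ?_, fun x hx => ?_⟩
      · intro cp hcp
        rcases List.mem_append.mp hcp with h' | h'
        · exact hl cp h'
        · exact hL cp h'
      · rw [Finset.sum_cons, psFun_append, hfl x hx, hFL x hx]

/-- If `g = psFun l` on `[xstar,∞)` and `g'` is a derivative of `g` there which is
continuous on `[xstar,∞)`, then `g' = psFun (dList l)` on `[xstar,∞)`. -/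
lemma snd_eq {xstar : ℝ} (hx : 0 < xstar) {g g' : ℝ → ℝ}
    (hd : ∀ x, xstar ≤ x → HasDerivAt g (g' x) x)
    (hc : ContinuousOn g' (Set.Ici xstar))
    {l : List (ℝ × ℝ)}
    (heq : ∀ x, xstar ≤ x → g x = psFun l x) :
    ∀ x, xstar ≤ x → g' x = psFun (dList l) x := by
  have hint : ∀ x, xstar < x → g' x = psFun (dList l) x := by
    intro x hx'
    have hxpos : 0 < x := hx.trans hx'
    have hev : g =ᶠ[nhds x] psFun l := by
      filter_upwards [Ioi_mem_nhds hx'] with y hy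
      exact heq y (le_of_lt hy)
    exact (hd x hx'.le).unique ((hasDerivAt_psFun l hxpos).congr_of_eventuallyEq hev)
  intro x hx'
  rcases hx'.lt_or_eq with h | h
  · exact hint x h
  · subst h
    have t1 : Filter.Tendsto g' (nhdsWithin xstar (Set.Ioi xstar)) (nhds (g' xstar)) :=
      (hc xstar Set.self_mem_Ici).mono_left (nhdsWithin_mono xstar Set.Ioi_subset_Ici_self)
    have t2 : Filter.Tendsto (psFun (dList l)) (nhdsWithin xstar (Set.Ioi xstar))
        (nhds (psFun (dList l) xstar)) :=
      ((continuousAt_psFun (dList l) hx).continuousWithinAt).mono_left le_rfl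
    have hev2 : g' =ᶠ[nhdsWithin xstar (Set.Ioi xstar)] psFun (dList l) :=
      Filter.eventually_of_mem self_mem_nhdsWithin fun y hy => hint y hy
    exact tendsto_nhds_unique (t1.congr' hev2) t2

end WKBaux

/-- The WKB hierarchy on `[x*,∞)` for `f(x) = x^γ` and spectral parameter `λ`:
`S₀(x) = −∫_{x*}^x f(s)/2 ds`, `S₁(x) = ∫_{x*}^x λ/f(s) ds`, and for `k ≥ 2`,
`S_k' = S_{k−1}''/f + f⁻¹·Σ_{j=1}^{k−1} S_j'·S_{k−j}'` with `S_k(x*) = 0`.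
Here `S' k` and `S'' k` denote the first and second derivatives of `S k`. -/
structure WKBHierarchy (γ lam xstar : ℝ) (S S' S'' : ℕ → ℝ → ℝ) : Prop where
  deriv1 : ∀ k, ∀ x, xstar ≤ x → HasDerivAt (S k) (S' k x) x
  deriv2 : ∀ k, ∀ x, xstar ≤ x → HasDerivAt (S' k) (S'' k x) x
  cont2 : ∀ k, ContinuousOn (S'' k) (Set.Ici xstar)
  S0_def : ∀ x, S 0 x = -(∫ s in xstar..x, s ^ γ / 2)
  S1_def : ∀ x, S 1 x = ∫ s in xstar..x, lam / s ^ γ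
  recurrence : ∀ k, 2 ≤ k → ∀ x, xstar ≤ x →
    S' k x = S'' (k - 1) x / x ^ γ
      + (1 / x ^ γ) * ∑ j ∈ Finset.Ico 1 k, S' j x * S' (k - j) x
  init : ∀ k, 2 ≤ k → S k xstar = 0

namespace WKBaux

lemma S1'_eq {γ lam xstar : ℝ} (hγ : 0 < γ) (hx : 0 < xstar)
    {S S' S'' : ℕ → ℝ → ℝ} (hS : WKBHierarchy γ lam xstar S S' S'') :
    ∀ x, xstar ≤ x → S' 1 x = psFun [(lam, -γ)] x := by
  intro x hxx
  have hxpos : 0 < x := lt_of_lt_of_le hx hxx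
  set f : ℝ → ℝ := fun s => lam / s ^ γ with hf
  have hCA : ∀ s : ℝ, 0 < s → ContinuousAt f s := by
    intro s hs
    exact continuousAt_const.div
      (Real.continuousAt_rpow_const s γ (Or.inl (ne_of_gt hs)))
      (ne_of_gt (Real.rpow_pos_of_pos hs γ))
  have hcont : ContinuousOn f (Set.Ioi 0) := fun s hs => (hCA s hs).continuousWithinAt
  have hsub : Set.uIcc xstar x ⊆ Set.Ioi 0 := by
    rw [Set.uIcc_of_le hxx]
    intro s hs
    exact lt_of_lt_of_le hx hs.1
  have hint : IntervalIntegrable f volume xstar x := (hcont.mono hsub).intervalIntegrable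
  have hmeas : StronglyMeasurableAtFilter f (nhds x) volume :=
    hcont.stronglyMeasurableAtFilter isOpen_Ioi x hxpos
  have hftc : HasDerivAt (fun u => ∫ s in xstar..u, f s) (f x) x :=
    intervalIntegral.integral_hasDerivAt_right hint hmeas (hCA x hxpos)
  have hS1 : HasDerivAt (S 1) (f x) x := by
    have h : S 1 = fun u => ∫ s in xstar..u, f s := funext fun u => hS.S1_def u
    rw [h]; exact hftc
  have huniq := (hS.deriv1 1 x hxx).unique hS1
  rw [huniq]
  simp only [psFun_cons, psFun_nil, add_zero, hf]
  rw [Real.rpow_neg hxpos.le, div_eq_mul_inv]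

/-- Key structural lemma: for `k ≥ 1`, `S' k` and `S'' k` agree on `[xstar,∞)` with
power sums whose exponents are at most `-(kγ + (k-1)·min(γ,1))`. -/
lemma key {γ lam xstar : ℝ} (hγ : 0 < γ) (hx : 0 < xstar)
    {S S' S'' : ℕ → ℝ → ℝ} (hS : WKBHierarchy γ lam xstar S S' S'') :
    ∀ k : ℕ, 1 ≤ k → ∃ l : List (ℝ × ℝ),
      (∀ cp ∈ l, cp.2 ≤ -((k : ℝ) * γ + ((k : ℝ) - 1) * min γ 1)) ∧
      ∀ x, xstar ≤ x → S' k x = psFun l x ∧ S'' k x = psFun (dList l) x := by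
  intro k
  induction k using Nat.strong_induction_on with
  | _ k ih =>
  intro hk1
  have hμγ : min γ 1 ≤ γ := min_le_left _ _
  have hμ1 : min γ 1 ≤ 1 := min_le_right _ _
  rcases Nat.lt_or_ge k 2 with hk2 | hk2
  · -- base case k = 1
    have hk : k = 1 := by omega
    subst hk
    have hfst := S1'_eq hγ hx hS
    refine ⟨[(lam, -γ)], ?_, fun x hxx =>
      ⟨hfst x hxx, snd_eq hx (hS.deriv2 1) (hS.cont2 1) hfst x hxx⟩⟩
    intro cp hcp
    simp only [List.mem_singleton] at hcp
    subst hcp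
    push_cast
    simp
  · -- inductive step k ≥ 2
    obtain ⟨l1, hl1e, hl1⟩ := ih (k - 1) (by omega) (by omega)
    have hsum : ∀ j ∈ Finset.Ico 1 k, ∃ l : List (ℝ × ℝ),
        (∀ cp ∈ l, cp.2 ≤ γ - ((k : ℝ) * γ + ((k : ℝ) - 1) * min γ 1)) ∧
        ∀ x ∈ Set.Ici xstar, S' j x * S' (k - j) x = psFun l x := by
      intro j hj
      rw [Finset.mem_Ico] at hj
      obtain ⟨lj, hlje, hlj⟩ := ih j hj.2 hj.1
      obtain ⟨lkj, hlkje, hlkj⟩ := ih (k - j) (by omega) (by omega)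
      refine ⟨mulList lj lkj, ?_, fun x hxx => ?_⟩
      · intro cp hcp
        have h1 := mulList_exps hlje hlkje cp hcp
        refine h1.trans ?_
        have hc1 : ((k - j : ℕ) : ℝ) = (k : ℝ) - (j : ℝ) := by
          rw [Nat.cast_sub hj.2.le]
        rw [hc1]
        linarith
      · rw [(hlj x hxx).1, (hlkj x hxx).1,
          psFun_mul _ _ (lt_of_lt_of_le hx (Set.mem_Ici.mp hxx))]
    obtain ⟨L, hLe, hLsum⟩ := exists_psList_sum (Finset.Ico 1 k) _ _ (Set.Ici xstar) hsum
    have hc2 : ((k - 1 : ℕ) : ℝ) = (k : ℝ) - 1 := by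
      rw [Nat.cast_sub hk1]; norm_num
    refine ⟨shiftList (-γ) (dList l1) ++ shiftList (-γ) L, ?_, ?_⟩
    · intro cp hcp
      rcases List.mem_append.mp hcp with h' | h'
      · have h1 := shiftList_exps (-γ) (dList_exps hl1e) cp h'
        rw [hc2] at h1
        linarith
      · have h1 := shiftList_exps (-γ) hLe cp h'
        linarith
    · have hfst : ∀ x, xstar ≤ x →
          S' k x = psFun (shiftList (-γ) (dList l1) ++ shiftList (-γ) L) x := by
        intro x hxx
        have hxpos : 0 < x := lt_of_lt_of_le hx hxx
        rw [hS.recurrence k hk2 x hxx, (hl1 x hxx).2, hLsum x (Set.mem_Ici.mpr hxx),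
          psFun_append, psFun_shift _ _ hxpos, psFun_shift _ _ hxpos,
          Real.rpow_neg hxpos.le, div_eq_mul_inv]
        ring
      exact fun x hxx => ⟨hfst x hxx,
        snd_eq hx (hS.deriv2 k) (hS.cont2 k) hfst x hxx⟩

end WKBaux

/-- **Decay of the WKB correction terms.**  For every `k ≥ 2` there is `C_k > 0`
with `|S_k'(x)| ≤ C_k·x^{−(2k−1)γ}` for `0 < γ ≤ 1` and
`|S_k'(x)| ≤ C_k·x^{−(kγ+k−1)}` for `γ > 1`, on `[x*,∞)`.  In the resonant case
`γ = 1/(2k−1)` one moreover has `|S_k(x)| ≤ C_k·log x` for all large `x`. -/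
theorem stmt4 (γ lam xstar : ℝ) (hγ : 0 < γ) (hlam : 0 < lam) (hx : 0 < xstar)
    (hturn : ∀ x, xstar ≤ x → 0 ≤ (x ^ γ) ^ 2 / 4 - (γ * x ^ (γ - 1)) / 2 - lam)
    (S S' S'' : ℕ → ℝ → ℝ) (hS : WKBHierarchy γ lam xstar S S' S'') :
    (∀ k : ℕ, 2 ≤ k → ∃ C : ℝ, 0 < C ∧ ∀ x, xstar ≤ x →
      (γ ≤ 1 → |S' k x| ≤ C * x ^ (-((2 * (k : ℝ) - 1) * γ))) ∧
      (1 < γ → |S' k x| ≤ C * x ^ (-((k : ℝ) * γ + (k : ℝ) - 1)))) ∧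
    (∀ k : ℕ, 2 ≤ k → γ = 1 / (2 * (k : ℝ) - 1) →
      ∃ C : ℝ, 0 < C ∧ ∃ X : ℝ, max xstar 2 ≤ X ∧
        ∀ x, X ≤ x → |S k x| ≤ C * Real.log x) := by
  constructor
  · intro k hk
    obtain ⟨l, hle, hl⟩ := WKBaux.key hγ hx hS k (by omega)
    obtain ⟨C, hC, hCb⟩ := WKBaux.psFun_bound l hx hle
    refine ⟨C, hC, fun x hxx => ⟨fun hγ1 => ?_, fun hγ1 => ?_⟩⟩
    · have hmin : min γ 1 = γ := min_eq_left hγ1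
      have he : -((2 * (k : ℝ) - 1) * γ) = -((k : ℝ) * γ + ((k : ℝ) - 1) * min γ 1) := by
        rw [hmin]; ring
      rw [he, (hl x hxx).1]
      exact hCb x hxx
    · have hmin : min γ 1 = 1 := min_eq_right hγ1.le
      have he : -((k : ℝ) * γ + (k : ℝ) - 1) = -((k : ℝ) * γ + ((k : ℝ) - 1) * min γ 1) := by
        rw [hmin]; ring
      rw [he, (hl x hxx).1]
      exact hCb x hxx
  · intro k hk hres
    have hk2 : (2 : ℝ) ≤ (k : ℝ) := by exact_mod_cast hk
    have hk3 : (3 : ℝ) ≤ 2 * (k : ℝ) - 1 := by linarith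
    have hγ1 : γ ≤ 1 := by
      rw [hres, div_le_one (by linarith)]; linarith
    have hmin : min γ 1 = γ := min_eq_left hγ1
    have hbk : (k : ℝ) * γ + ((k : ℝ) - 1) * min γ 1 = 1 := by
      rw [hmin, hres]
      have hne : (2 * (k : ℝ) - 1) ≠ 0 := by linarith
      field_simp
      rw [div_eq_one_iff_eq (by linarith)]
      ring
    obtain ⟨l, hle, hl⟩ := WKBaux.key hγ hx hS k (by omega)
    obtain ⟨C, hC, hCb⟩ := WKBaux.psFun_bound l hx hle
    rw [hbk] at hCb
    have hbound : ∀ x, xstar ≤ x → |S' k x| ≤ C * x ^ (-1 : ℝ) := by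
      intro x hxx
      rw [(hl x hxx).1]
      exact hCb x hxx
    set D := |Real.log xstar| with hD
    have hDnn : 0 ≤ D := abs_nonneg _
    refine ⟨C * (1 + 2 * D) + 1, by positivity, max xstar 2, le_rfl, fun x hXx => ?_⟩
    have hxsx : xstar ≤ x := le_trans (le_max_left _ _) hXx
    have hx2 : (2 : ℝ) ≤ x := le_trans (le_max_right _ _) hXx
    have hxpos : 0 < x := by linarith
    have hIcc : Set.uIcc xstar x = Set.Icc xstar x := Set.uIcc_of_le hxsx
    have hmem : ∀ t ∈ Set.uIcc xstar x, xstar ≤ t := by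
      intro t ht
      rw [hIcc] at ht
      exact ht.1
    have hcS : ContinuousOn (S' k) (Set.uIcc xstar x) := fun t ht =>
      ((hS.deriv2 k t (hmem t ht)).continuousAt).continuousWithinAt
    have hintS : IntervalIntegrable (S' k) volume xstar x := hcS.intervalIntegrable
    have hFTC : ∫ t in xstar..x, S' k t = S k x - S k xstar :=
      intervalIntegral.integral_eq_sub_of_hasDerivAt
        (fun t ht => hS.deriv1 k t (hmem t ht)) hintS
    have hSk : S k x = ∫ t in xstar..x, S' k t := by
      rw [hFTC, hS.init k hk, sub_zero]
    have hcomp : ContinuousOn (fun t : ℝ => C * t ^ (-1 : ℝ)) (Set.uIcc xstar x) := by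
      intro t ht
      have htpos : 0 < t := lt_of_lt_of_le hx (hmem t ht)
      exact (continuousAt_const.mul
        (Real.continuousAt_rpow_const t _ (Or.inl (ne_of_gt htpos)))).continuousWithinAt
    have hintC : IntervalIntegrable (fun t : ℝ => C * t ^ (-1 : ℝ)) volume xstar x :=
      hcomp.intervalIntegrable
    have h1 : |S k x| ≤ ∫ t in xstar..x, |S' k t| := by
      rw [hSk]
      exact intervalIntegral.abs_integral_le_integral_abs hxsx
    have h2 : (∫ t in xstar..x, |S' k t|) ≤ ∫ t in xstar..x, C * t ^ (-1 : ℝ) :=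
      intervalIntegral.integral_mono_on hxsx hintS.abs hintC
        (fun t ht => hbound t ht.1)
    have h3 : (∫ t in xstar..x, C * t ^ (-1 : ℝ))
        = C * (Real.log x - Real.log xstar) := by
      rw [intervalIntegral.integral_const_mul]
      have he : Set.EqOn (fun t : ℝ => t ^ (-1 : ℝ)) (fun t : ℝ => 1 / t)
          (Set.uIcc xstar x) := by
        intro t _
        simp only [Real.rpow_neg_one, one_div]
      rw [intervalIntegral.integral_congr he]
      have h0 : (0 : ℝ) ∉ Set.uIcc xstar x := by
        rw [hIcc]
        rintro ⟨h0, -⟩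
        linarith
      rw [integral_one_div h0, Real.log_div (ne_of_gt hxpos) (ne_of_gt hx)]
    have hlog2 : 0 < Real.log 2 := Real.log_pos one_lt_two
    have hlog2half : (1 : ℝ) / 2 ≤ Real.log 2 := by
      nlinarith [Real.log_two_gt_d9]
    have hlogx : Real.log 2 ≤ Real.log x := Real.log_le_log two_pos hx2
    have hnegs : -Real.log xstar ≤ D := neg_le_abs _
    have e1 : C * D ≤ 2 * (C * D) * Real.log 2 := by
      nlinarith [mul_nonneg hC.le hDnn]
    have e2 : 2 * (C * D) * Real.log 2 ≤ 2 * (C * D) * Real.log x := by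
      nlinarith [mul_nonneg hC.le hDnn]
    have hLpos : 0 < Real.log x := lt_of_lt_of_le hlog2 hlogx
    calc |S k x| ≤ ∫ t in xstar..x, C * t ^ (-1 : ℝ) := le_trans h1 h2
      _ = C * (Real.log x - Real.log xstar) := h3
      _ ≤ C * Real.log x + C * D := by
            have := mul_le_mul_of_nonneg_left hnegs hC.le
            nlinarith
      _ ≤ (C * (1 + 2 * D) + 1) * Real.log x := by
            have expand : (C * (1 + 2 * D) + 1) * Real.log x
                = C * Real.log x + 2 * (C * D) * Real.log x + Real.log x := by ring
            rw [expand]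
            linarith
end

section
/- Fix 0<γ<1 and λ>0, and let (S_k') be defined on (0,∞) by S₁'(x) = λ·x^{−γ} and, for k ≥ 2, S_k'(x) = S_{k−1}''(x)/x^γ + (1/x^γ)·Σ_{j=1}^{k−1} S_j'(x)·S_{k−j}'(x). Then for every n ≥ 1 there exist real numbers A_{n,1}, …, A_{n,n} (depending on γ) such that for all x > 0: S_n'(x) = Σ_{i=1}^{n} λ^{i}·A_{n,i}·x^{−((n+i−1)γ + (n−i))}; moreover (−1)^{n−i}·A_{n,i} > 0 for every 1 ≤ i ≤ n, and the leading coefficient satisfies A_{n,n} = (1/n)·binomial(2(n−1), n−1). -/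
open Real

/-- exponent appearing in the WKB expansion -/
noncomputable def wE (γ : ℝ) (p i : ℕ) : ℝ :=
  -(((p : ℝ) + (i : ℝ) - 1) * γ + ((p : ℝ) - (i : ℝ)))

lemma wE_def (γ : ℝ) (p i : ℕ) :
    wE γ p i = -(((p : ℝ) + (i : ℝ) - 1) * γ + ((p : ℝ) - (i : ℝ))) := rfl

lemma deriv_sum_rpow' {s : Finset ℕ} {c r : ℕ → ℝ} {f : ℝ → ℝ}
    (hf : ∀ y : ℝ, 0 < y → f y = ∑ i ∈ s, c i * y ^ (r i)) {x : ℝ} (hx : 0 < x) :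
    deriv f x = ∑ i ∈ s, c i * (r i * x ^ (r i - 1)) := by
  have h1 : f =ᶠ[nhds x] fun y => ∑ i ∈ s, c i * y ^ (r i) := by
    filter_upwards [isOpen_Ioi.mem_nhds (show x ∈ Set.Ioi 0 from hx)] with y hy
    exact hf y hy
  rw [h1.deriv_eq]
  have h2 : HasDerivAt (fun y : ℝ => ∑ i ∈ s, c i * y ^ (r i))
      (∑ i ∈ s, c i * (r i * x ^ (r i - 1))) x := by
    apply HasDerivAt.fun_sum
    intro i _
    exact (Real.hasDerivAt_rpow_const (Or.inl hx.ne')).const_mul (c i)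
  exact h2.deriv

lemma catalan_pos' (n : ℕ) : 0 < catalan n := by
  have h := succ_mul_catalan_eq_centralBinom n
  have h2 := Nat.centralBinom_pos n
  by_contra hc
  push_neg at hc
  interval_cases c : catalan n
  · omega

lemma choose_div_eq_catalan' (m : ℕ) :
    ((Nat.choose (2 * m) m : ℕ) : ℝ) / ((m : ℝ) + 1) = (catalan m : ℝ) := by
  have h := succ_mul_catalan_eq_centralBinom m
  rw [Nat.centralBinom_eq_two_mul_choose] at h
  have h2 : ((m : ℝ) + 1) * (catalan m : ℝ) = ((Nat.choose (2 * m) m : ℕ) : ℝ) := by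
    exact_mod_cast congrArg (Nat.cast (R := ℝ)) h
  field_simp [← h2]
  linarith

/-- **General structure of the WKB terms `S_n'` for `0 < γ < 1`.**  With
`S₁'(x) = λ·x^{−γ}` and the recursion
`S_k' = (S_{k−1}')'/x^γ + x^{−γ}·Σ_{j=1}^{k−1} S_j'·S_{k−j}'`, each `S_n'` is a
sum `Σ_{i=1}^n λ^i·A_{n,i}·x^{−((n+i−1)γ+(n−i))}` with signs
`sign(A_{n,i}) = (−1)^{n−i}` and leading coefficient
`A_{n,n} = (1/n)·C(2(n−1), n−1)`. -/
theorem stmt16 (γ lam : ℝ) (hγ0 : 0 < γ) (hγ1 : γ < 1) (hlam : 0 < lam)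
    (S' : ℕ → ℝ → ℝ)
    (hdiff : ∀ k, DifferentiableOn ℝ (S' k) (Set.Ioi 0))
    (hS1 : ∀ x : ℝ, 0 < x → S' 1 x = lam * x ^ (-γ))
    (hrec : ∀ k : ℕ, 2 ≤ k → ∀ x : ℝ, 0 < x →
      S' k x = deriv (S' (k - 1)) x / x ^ γ
        + (1 / x ^ γ) * ∑ j ∈ Finset.Ico 1 k, S' j x * S' (k - j) x) :
    ∀ n : ℕ, 1 ≤ n → ∃ A : ℕ → ℝ,
      (∀ x : ℝ, 0 < x →
        S' n x = ∑ i ∈ Finset.Icc 1 n,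
          lam ^ i * A i
            * x ^ (-(((n : ℝ) + (i : ℝ) - 1) * γ + ((n : ℝ) - (i : ℝ))))) ∧
      (∀ i ∈ Finset.Icc 1 n, 0 < (-1 : ℝ) ^ (n - i) * A i) ∧
      A n = (Nat.choose (2 * (n - 1)) (n - 1) : ℝ) / (n : ℝ) := by
  intro n
  induction n using Nat.strong_induction_on with
  | _ n IH =>
  intro hn
  match n, hn with
  | 1, _ =>
    refine ⟨fun _ => 1, ?_, ?_, ?_⟩
    · intro x hx
      rw [hS1 x hx]
      rw [Finset.Icc_self, Finset.sum_singleton]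
      norm_num
    · intro i hi
      rw [Finset.mem_Icc] at hi
      have : i = 1 := by omega
      subst this
      norm_num
    · norm_num
  | (m + 2), _ =>
    -- choose the coefficient sequences for all smaller indices
    have hIH : ∀ j : ℕ, ∃ A : ℕ → ℝ, 1 ≤ j → j ≤ m + 1 →
        ((∀ x : ℝ, 0 < x →
          S' j x = ∑ i ∈ Finset.Icc 1 j,
            lam ^ i * A i * x ^ (wE γ j i)) ∧
        (∀ i ∈ Finset.Icc 1 j, 0 < (-1 : ℝ) ^ (j - i) * A i) ∧
        A j = (Nat.choose (2 * (j - 1)) (j - 1) : ℝ) / (j : ℝ)) := by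
      intro j
      by_cases h : 1 ≤ j ∧ j ≤ m + 1
      · obtain ⟨A, hA1, hA2, hA3⟩ := IH j (by omega) h.1
        refine ⟨A, fun _ _ => ⟨fun x hx => ?_, hA2, hA3⟩⟩
        rw [hA1 x hx]
        simp only [wE_def]
      · exact ⟨fun _ => 0, fun h1 h2 => absurd ⟨h1, h2⟩ h⟩
    choose B hB using hIH
    have hBf : ∀ j, 1 ≤ j → j ≤ m + 1 → ∀ x : ℝ, 0 < x →
        S' j x = ∑ i ∈ Finset.Icc 1 j, lam ^ i * B j i * x ^ (wE γ j i) :=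
      fun j h1 h2 => (hB j h1 h2).1
    have hBs : ∀ j, 1 ≤ j → j ≤ m + 1 →
        ∀ i ∈ Finset.Icc 1 j, 0 < (-1 : ℝ) ^ (j - i) * B j i :=
      fun j h1 h2 => (hB j h1 h2).2.1
    have hBcat : ∀ j, 1 ≤ j → j ≤ m + 1 → B j j = (catalan (j - 1) : ℝ) := by
      intro j h1 h2
      rw [(hB j h1 h2).2.2]
      have hc := choose_div_eq_catalan' (j - 1)
      rw [show ((j - 1 : ℕ) : ℝ) + 1 = (j : ℝ) by
        push_cast [Nat.cast_sub h1]
        ring] at hc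
      exact hc
    -- the new coefficients
    set A : ℕ → ℝ := fun i =>
      (if i ≤ m + 1 then wE γ (m + 1) i * B (m + 1) i else 0)
      + ∑ j ∈ Finset.Ico 1 (m + 2), ∑ a ∈ Finset.Icc 1 j,
          ∑ b ∈ Finset.Icc 1 (m + 2 - j),
            (if a + b = i then B j a * B (m + 2 - j) b else 0) with hAdef
    refine ⟨A, ?_, ?_, ?_⟩
    · -- the formula
      intro x hx
      have hxγ : (0 : ℝ) < x ^ γ := Real.rpow_pos_of_pos hx γ
      rw [hrec (m + 2) (by omega) x hx]
      rw [show m + 2 - 1 = m + 1 from rfl]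
      -- derivative part
      have e1 : deriv (S' (m + 1)) x / x ^ γ
          = ∑ i ∈ Finset.Icc 1 (m + 1),
              lam ^ i * (wE γ (m + 1) i * B (m + 1) i) * x ^ (wE γ (m + 2) i) := by
        rw [deriv_sum_rpow' (c := fun i => lam ^ i * B (m + 1) i)
          (r := fun i => wE γ (m + 1) i) (fun y hy => hBf (m + 1) (by omega) le_rfl y hy) hx]
        rw [Finset.sum_div]
        refine Finset.sum_congr rfl fun i hi => ?_
        have h2 : wE γ (m + 2) i = (wE γ (m + 1) i - 1) - γ := by
          simp only [wE_def]; push_cast; ring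
        rw [h2, Real.rpow_sub hx (wE γ (m + 1) i - 1) γ,
          Real.rpow_sub hx (wE γ (m + 1) i) 1, Real.rpow_one]
        field_simp
      -- product part
      have e2 : (1 / x ^ γ) * ∑ j ∈ Finset.Ico 1 (m + 2), S' j x * S' (m + 2 - j) x
          = ∑ i ∈ Finset.Icc 1 (m + 2),
              lam ^ i * (∑ j ∈ Finset.Ico 1 (m + 2), ∑ a ∈ Finset.Icc 1 j,
                ∑ b ∈ Finset.Icc 1 (m + 2 - j),
                  (if a + b = i then B j a * B (m + 2 - j) b else 0))
              * x ^ (wE γ (m + 2) i) := by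
        have e2a : ∀ j ∈ Finset.Ico 1 (m + 2),
            (1 / x ^ γ) * (S' j x * S' (m + 2 - j) x)
            = ∑ a ∈ Finset.Icc 1 j, ∑ b ∈ Finset.Icc 1 (m + 2 - j),
                lam ^ (a + b) * (B j a * B (m + 2 - j) b) * x ^ (wE γ (m + 2) (a + b)) := by
          intro j hj
          rw [Finset.mem_Ico] at hj
          have hj1 : 1 ≤ j := hj.1
          have hj2 : j ≤ m + 1 := by omega
          rw [hBf j hj1 hj2 x hx, hBf (m + 2 - j) (by omega) (by omega) x hx]
          rw [Finset.sum_mul_sum, Finset.mul_sum]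
          refine Finset.sum_congr rfl fun a ha => ?_
          rw [Finset.mul_sum]
          refine Finset.sum_congr rfl fun b hb => ?_
          have hE : wE γ (m + 2) (a + b) = wE γ j a + wE γ (m + 2 - j) b - γ := by
            simp only [wE_def]
            have hc1 : ((m + 2 - j : ℕ) : ℝ) = (m : ℝ) + 2 - (j : ℝ) := by
              push_cast [Nat.cast_sub (show j ≤ m + 2 by omega)]; ring
            rw [hc1]
            push_cast
            ring
          rw [hE, Real.rpow_sub hx, Real.rpow_add hx, pow_add]
          field_simp
        rw [Finset.mul_sum]
        rw [Finset.sum_congr rfl e2a]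
        -- introduce the index i
        have e2b : ∀ j ∈ Finset.Ico 1 (m + 2),
            (∑ i ∈ Finset.Icc 1 (m + 2), ∑ a ∈ Finset.Icc 1 j,
                ∑ b ∈ Finset.Icc 1 (m + 2 - j),
                  (if a + b = i then
                    lam ^ (a + b) * (B j a * B (m + 2 - j) b)
                      * x ^ (wE γ (m + 2) (a + b)) else 0))
            = ∑ a ∈ Finset.Icc 1 j, ∑ b ∈ Finset.Icc 1 (m + 2 - j),
              lam ^ (a + b) * (B j a * B (m + 2 - j) b) * x ^ (wE γ (m + 2) (a + b)) := by
          intro j hj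
          rw [Finset.mem_Ico] at hj
          rw [Finset.sum_comm]
          refine Finset.sum_congr rfl fun a ha => ?_
          rw [Finset.sum_comm]
          refine Finset.sum_congr rfl fun b hb => ?_
          rw [Finset.mem_Icc] at ha hb
          rw [Finset.sum_ite_eq (Finset.Icc 1 (m + 2)) (a + b)
            (fun _ => lam ^ (a + b) * (B j a * B (m + 2 - j) b)
              * x ^ (wE γ (m + 2) (a + b)))]
          exact if_pos (Finset.mem_Icc.2 ⟨by omega, by omega⟩)
        rw [Finset.sum_congr rfl (fun j hj => (e2b j hj).symm)]
        rw [Finset.sum_comm]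
        refine Finset.sum_congr rfl fun i hi => ?_
        rw [Finset.mul_sum, Finset.sum_mul]
        refine Finset.sum_congr rfl fun j hj => ?_
        rw [Finset.mul_sum, Finset.sum_mul]
        refine Finset.sum_congr rfl fun a ha => ?_
        rw [Finset.mul_sum, Finset.sum_mul]
        refine Finset.sum_congr rfl fun b hb => ?_
        by_cases hab : a + b = i
        · rw [if_pos hab, if_pos hab, hab]
        · rw [if_neg hab, if_neg hab]
          ring
      rw [e1, e2]
      -- assemble
      have e3 : ∑ i ∈ Finset.Icc 1 (m + 2),
              lam ^ i * (if i ≤ m + 1 then wE γ (m + 1) i * B (m + 1) i else 0)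
                * x ^ (wE γ (m + 2) i)
          = ∑ i ∈ Finset.Icc 1 (m + 1),
              lam ^ i * (wE γ (m + 1) i * B (m + 1) i) * x ^ (wE γ (m + 2) i) := by
        rw [← Finset.sum_subset (Finset.Icc_subset_Icc_right (by omega : m + 1 ≤ m + 2))
          (by
            intro i hi hni
            rw [Finset.mem_Icc] at hi hni
            rw [if_neg (by omega)]
            ring)]
        refine Finset.sum_congr rfl fun i hi => ?_
        rw [Finset.mem_Icc] at hi
        rw [if_pos hi.2]
      rw [← e3, ← Finset.sum_add_distrib]
      refine Finset.sum_congr rfl fun i hi => ?_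
      simp only [hAdef, wE_def]
      ring
    · -- the signs
      intro i hi
      rw [Finset.mem_Icc] at hi
      have hD : i ≤ m + 1 →
          0 < (-1 : ℝ) ^ (m + 2 - i) * (wE γ (m + 1) i * B (m + 1) i) := by
        intro him
        have hα : 0 < ((m : ℝ) + 1 + (i : ℝ) - 1) * γ + ((m : ℝ) + 1 - (i : ℝ)) := by
          have hi1 : (1 : ℝ) ≤ (i : ℝ) := by exact_mod_cast hi.1
          have hm0 : (0 : ℝ) ≤ (m : ℝ) := Nat.cast_nonneg m
          have hiM : (i : ℝ) ≤ (m : ℝ) + 1 := by exact_mod_cast him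
          have h1 : (0 : ℝ) < ((m : ℝ) + 1 + (i : ℝ) - 1) * γ := by
            apply mul_pos _ hγ0
            linarith
          linarith
        have hsgn := hBs (m + 1) (by omega) le_rfl i (Finset.mem_Icc.2 ⟨hi.1, him⟩)
        have hE : wE γ (m + 1) i
            = -(((m : ℝ) + 1 + (i : ℝ) - 1) * γ + ((m : ℝ) + 1 - (i : ℝ))) := by
          rw [wE_def]; push_cast; ring
        rw [hE, show m + 2 - i = (m + 1 - i) + 1 from by omega, pow_succ]
        have hring : (-1 : ℝ) ^ (m + 1 - i) * (-1)
              * (-(((m : ℝ) + 1 + (i : ℝ) - 1) * γ + ((m : ℝ) + 1 - (i : ℝ)))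
                  * B (m + 1) i)
            = (((m : ℝ) + 1 + (i : ℝ) - 1) * γ + ((m : ℝ) + 1 - (i : ℝ)))
              * ((-1 : ℝ) ^ (m + 1 - i) * B (m + 1) i) := by ring
        rw [hring]
        exact mul_pos hα hsgn
      have hterm : ∀ j ∈ Finset.Ico 1 (m + 2), ∀ a ∈ Finset.Icc 1 j,
          ∀ b ∈ Finset.Icc 1 (m + 2 - j),
          0 ≤ (-1 : ℝ) ^ (m + 2 - i)
            * (if a + b = i then B j a * B (m + 2 - j) b else 0) := by
        intro j hj a ha b hb
        by_cases hab : a + b = i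
        · rw [if_pos hab]
          rw [Finset.mem_Ico] at hj
          have ha' := Finset.mem_Icc.1 ha
          have hb' := Finset.mem_Icc.1 hb
          have h1 := hBs j hj.1 (by omega) a ha
          have h2 := hBs (m + 2 - j) (by omega) (by omega) b hb
          have h3 : 0 < ((-1 : ℝ) ^ (j - a) * B j a)
              * ((-1 : ℝ) ^ (m + 2 - j - b) * B (m + 2 - j) b) := mul_pos h1 h2
          have h4 : ((-1 : ℝ) ^ (j - a) * B j a)
              * ((-1 : ℝ) ^ (m + 2 - j - b) * B (m + 2 - j) b)
              = (-1 : ℝ) ^ ((j - a) + (m + 2 - j - b))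
                  * (B j a * B (m + 2 - j) b) := by
            rw [pow_add]; ring
          rw [h4, show (j - a) + (m + 2 - j - b) = m + 2 - i from by omega] at h3
          exact le_of_lt h3
        · rw [if_neg hab, mul_zero]
      have hPnn : 0 ≤ (-1 : ℝ) ^ (m + 2 - i)
          * ∑ j ∈ Finset.Ico 1 (m + 2), ∑ a ∈ Finset.Icc 1 j,
              ∑ b ∈ Finset.Icc 1 (m + 2 - j),
                (if a + b = i then B j a * B (m + 2 - j) b else 0) := by
        rw [Finset.mul_sum]
        refine Finset.sum_nonneg fun j hj => ?_
        rw [Finset.mul_sum]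
        refine Finset.sum_nonneg fun a ha => ?_
        rw [Finset.mul_sum]
        refine Finset.sum_nonneg fun b hb => ?_
        exact hterm j hj a ha b hb
      by_cases him : i ≤ m + 1
      · simp only [hAdef]
        rw [mul_add, if_pos him]
        exact add_pos_of_pos_of_nonneg (hD him) hPnn
      · have hieq : i = m + 2 := by omega
        subst hieq
        simp only [hAdef]
        rw [mul_add, if_neg him, mul_zero, zero_add]
        rw [show m + 2 - (m + 2) = 0 from by omega, pow_zero, one_mul]
        apply Finset.sum_pos'
        · intro j hj
          refine Finset.sum_nonneg fun a ha => ?_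
          refine Finset.sum_nonneg fun b hb => ?_
          have h := hterm j hj a ha b hb
          simpa using h
        · refine ⟨1, Finset.mem_Ico.2 ⟨le_rfl, by omega⟩, ?_⟩
          apply Finset.sum_pos'
          · intro a ha
            refine Finset.sum_nonneg fun b hb => ?_
            have h := hterm 1 (Finset.mem_Ico.2 ⟨le_rfl, by omega⟩) a ha b hb
            simpa using h
          · refine ⟨1, Finset.mem_Icc.2 ⟨le_rfl, le_rfl⟩, ?_⟩
            apply Finset.sum_pos'
            · intro b hb
              have h := hterm 1 (Finset.mem_Ico.2 ⟨le_rfl, by omega⟩)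
                1 (Finset.mem_Icc.2 ⟨le_rfl, le_rfl⟩) b hb
              simpa using h
            · refine ⟨m + 1, Finset.mem_Icc.2 ⟨by omega, by omega⟩, ?_⟩
              rw [if_pos (by omega)]
              have h1 := hBs 1 le_rfl (by omega) 1 (Finset.mem_Icc.2 ⟨le_rfl, le_rfl⟩)
              have h2 := hBs (m + 1) (by omega) le_rfl (m + 1)
                (Finset.mem_Icc.2 ⟨by omega, le_rfl⟩)
              simp only [Nat.sub_self, pow_zero, one_mul] at h1 h2
              exact mul_pos h1 h2
    · -- the leading coefficient
      have hinner : ∀ j ∈ Finset.Ico 1 (m + 2),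
          (∑ a ∈ Finset.Icc 1 j, ∑ b ∈ Finset.Icc 1 (m + 2 - j),
            (if a + b = m + 2 then B j a * B (m + 2 - j) b else 0))
          = (catalan (j - 1) : ℝ) * (catalan (m + 1 - j) : ℝ) := by
        intro j hj
        rw [Finset.mem_Ico] at hj
        rw [Finset.sum_eq_single_of_mem j (Finset.mem_Icc.2 ⟨hj.1, le_rfl⟩)]
        · rw [Finset.sum_eq_single_of_mem (m + 2 - j)
            (Finset.mem_Icc.2 ⟨by omega, le_rfl⟩)]
          · rw [if_pos (by omega)]
            rw [hBcat j hj.1 (by omega), hBcat (m + 2 - j) (by omega) (by omega)]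
            rw [show m + 2 - j - 1 = m + 1 - j from by omega]
          · intro b hb hbne
            rw [Finset.mem_Icc] at hb
            rw [if_neg (by omega)]
        · intro a ha hane
          rw [Finset.mem_Icc] at ha
          refine Finset.sum_eq_zero fun b hb => ?_
          rw [Finset.mem_Icc] at hb
          rw [if_neg (by omega)]
      simp only [hAdef]
      rw [if_neg (show ¬ (m + 2 ≤ m + 1) from by omega), zero_add]
      rw [Finset.sum_congr rfl hinner]
      have hnat : ∑ j ∈ Finset.Ico 1 (m + 2), catalan (j - 1) * catalan (m + 1 - j)
          = catalan (m + 1) := by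
        rw [Finset.sum_Ico_eq_sum_range]
        rw [show m + 2 - 1 = m + 1 from rfl]
        rw [catalan_succ' m, Finset.Nat.sum_antidiagonal_eq_sum_range_succ_mk]
        refine Finset.sum_congr rfl fun i hi => ?_
        rw [Finset.mem_range] at hi
        rw [show 1 + i - 1 = i from by omega, show m + 1 - (1 + i) = m - i from by omega]
      have hcast : (∑ j ∈ Finset.Ico 1 (m + 2),
          (catalan (j - 1) : ℝ) * (catalan (m + 1 - j) : ℝ)) = (catalan (m + 1) : ℝ) := by
        rw [← hnat]
        push_cast
        rfl
      rw [hcast]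
      rw [show m + 2 - 1 = m + 1 from rfl]
      rw [← choose_div_eq_catalan' (m + 1)]
      congr 1
      push_cast
      ring
end
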